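/- Let G be a finite 2-group of nilpotency class at most 2 that is semi-rational. Then both the center Z(G) and the quotient G/Z(G) have exponent dividing 4. -/

import Mathlib

/-- `x` is a semi-rational element of `G`. -/
def IsSemiRationalElt {G : Type} [Group G] (x : G) : Prop :=
  ∃ r : ℤ, Int.gcd r (orderOf x) = 1 ∧ ∀ j : ℤ, Int.gcd j (orderOf x) = 1 →
    IsConj (x ^ j) x ∨ IsConj (x ^ j) (x ^ r)

/-- `G` is semi-rational if all its elements are semi-rational. -/
def IsSemiRatGroup (G : Type) [Group G] : Prop := ∀ x : G, IsSemiRationalElt x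

lemma odd_coprime_order {G : Type} [Group G] [Finite G] (h2 : IsPGroup 2 G) (x : G)
    (j : ℕ) (hj : Nat.Coprime j 2) : Int.gcd (j : ℤ) (orderOf x) = 1 := by
  obtain ⟨n, hn⟩ := h2 x
  have hd : orderOf x ∣ 2 ^ n := orderOf_dvd_of_pow_eq_one hn
  have : Nat.Coprime j (orderOf x) := Nat.Coprime.coprime_dvd_right hd (hj.pow_right n)
  simpa [Int.gcd] using this

open scoped commutatorElement in
lemma conj_zpow_mem_center {G : Type} [Group G] (hclass : commutator G ≤ Subgroup.center G)
    (x : G) (a b : ℤ) (h : IsConj (x ^ a) (x ^ b)) : x ^ (b - a) ∈ Subgroup.center G := by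
  obtain ⟨c, hc⟩ := isConj_iff.mp h
  have key : x ^ (b - a) = ⁅c, x ^ a⁆ := by
    rw [zpow_sub, ← hc, commutatorElement_def]
  rw [key]
  exact hclass (Subgroup.commutator_mem_commutator (Subgroup.mem_top c) (Subgroup.mem_top _))

lemma isConj_eq_of_mem_center {G : Type} [Group G] {a b : G}
    (ha : a ∈ Subgroup.center G) (h : IsConj a b) : a = b := by
  obtain ⟨c, hc⟩ := isConj_iff.mp h
  rw [← hc, Subgroup.mem_center_iff.mp ha c]
  group

/-- In a semi-rational finite 2-group of nilpotency class at most 2, both the center and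
the central quotient have exponent dividing 4. -/
theorem center_and_quotient_exponent_four (G : Type) [Group G] [Finite G]
    (h2 : IsPGroup 2 G) (hclass : commutator G ≤ Subgroup.center G)
    (hsr : IsSemiRatGroup G) :
    (∀ z ∈ Subgroup.center G, z ^ 4 = 1) ∧
    (∀ q : G ⧸ Subgroup.center G, q ^ 4 = 1) := by
  constructor
  · intro z hz
    obtain ⟨r, hr1, hr⟩ := hsr z
    have h3 := hr 3 (odd_coprime_order h2 z 3 (by decide))
    have h5 := hr 5 (odd_coprime_order h2 z 5 (by decide))
    have hz3 : z ^ (3 : ℤ) ∈ Subgroup.center G := zpow_mem hz 3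
    have hz5 : z ^ (5 : ℤ) ∈ Subgroup.center G := zpow_mem hz 5
    have e3 : z ^ (3 : ℤ) = z ∨ z ^ (3 : ℤ) = z ^ r := by
      rcases h3 with h | h
      · exact Or.inl (isConj_eq_of_mem_center hz3 h)
      · exact Or.inr (isConj_eq_of_mem_center hz3 h)
    have e5 : z ^ (5 : ℤ) = z ∨ z ^ (5 : ℤ) = z ^ r := by
      rcases h5 with h | h
      · exact Or.inl (isConj_eq_of_mem_center hz5 h)
      · exact Or.inr (isConj_eq_of_mem_center hz5 h)
    rcases e3 with h | h3r
    · -- z^3 = z ⇒ z^2 = 1 ⇒ z^4 = 1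
      have h2' : z ^ (2 : ℤ) = 1 := by
        have : z ^ (3 : ℤ) * z⁻¹ = z * z⁻¹ := by rw [h]
        calc z ^ (2 : ℤ) = z ^ (3 : ℤ) * z⁻¹ := by group
        _ = 1 := by rw [h]; group
      have : z ^ (4 : ℤ) = 1 := by
        calc z ^ (4 : ℤ) = (z ^ (2 : ℤ)) ^ (2 : ℤ) := by group
        _ = 1 := by rw [h2']; group
      exact_mod_cast this
    · rcases e5 with h | h5r
      · have : z ^ (4 : ℤ) = 1 := by
          calc z ^ (4 : ℤ) = z ^ (5 : ℤ) * z⁻¹ := by group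
          _ = 1 := by rw [h]; group
        exact_mod_cast this
      · -- z^3 = z^r = z^5 ⇒ z^2 = 1
        have h2' : z ^ (2 : ℤ) = 1 := by
          have h35 : z ^ (5 : ℤ) = z ^ (3 : ℤ) := by rw [h5r, h3r]
          calc z ^ (2 : ℤ) = z ^ (5 : ℤ) * (z ^ (3 : ℤ))⁻¹ := by group
          _ = 1 := by rw [h35]; group
        have : z ^ (4 : ℤ) = 1 := by
          calc z ^ (4 : ℤ) = (z ^ (2 : ℤ)) ^ (2 : ℤ) := by group
          _ = 1 := by rw [h2']; group
        exact_mod_cast this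
  · intro q
    induction q using QuotientGroup.induction_on with
    | H x =>
      have hx4 : x ^ (4 : ℤ) ∈ Subgroup.center G := by
        obtain ⟨r, hr1, hr⟩ := hsr x
        have h3 := hr 3 (odd_coprime_order h2 x 3 (by decide))
        have h5 := hr 5 (odd_coprime_order h2 x 5 (by decide))
        have c3 : x ^ ((1 : ℤ) - 3) ∈ Subgroup.center G ∨
            x ^ (r - 3) ∈ Subgroup.center G := by
          rcases h3 with h | h
          · exact Or.inl (conj_zpow_mem_center hclass x 3 1 (by rw [zpow_one]; exact h))
          · exact Or.inr (conj_zpow_mem_center hclass x 3 r h)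
        have c5 : x ^ ((1 : ℤ) - 5) ∈ Subgroup.center G ∨
            x ^ (r - 5) ∈ Subgroup.center G := by
          rcases h5 with h | h
          · exact Or.inl (conj_zpow_mem_center hclass x 5 1 (by rw [zpow_one]; exact h))
          · exact Or.inr (conj_zpow_mem_center hclass x 5 r h)
        rcases c3 with h | h3r
        · -- x^(-2) ∈ Z
          have : x ^ (4 : ℤ) = (x ^ ((1:ℤ) - 3)) ^ (-2 : ℤ) := by group
          rw [this]
          exact zpow_mem h _
        · rcases c5 with h | h5r
          · have : x ^ (4 : ℤ) = (x ^ ((1:ℤ) - 5)) ^ (-1 : ℤ) := by group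
            rw [this]
            exact zpow_mem h _
          · -- x^(r-3), x^(r-5) ∈ Z ⇒ x^2 ∈ Z ⇒ x^4 ∈ Z
            have h2' : x ^ (2 : ℤ) ∈ Subgroup.center G := by
              have : x ^ (2 : ℤ) = x ^ (r - 3) * (x ^ (r - 5))⁻¹ := by group
              rw [this]
              exact mul_mem h3r (inv_mem h5r)
            have : x ^ (4 : ℤ) = (x ^ (2 : ℤ)) ^ (2 : ℤ) := by group
            rw [this]
            exact zpow_mem h2' _
      rw [← QuotientGroup.mk_pow]
      rw [QuotientGroup.eq_one_iff]
      exact_mod_cast hx4
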